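/- If μ₀ ∈ ℝ, u₀ is a Schwartz eigenfunction of the PT-symmetric Schrödinger operator L with eigenvalue μ₀ (i.e. u₀'' + V·u₀ = -μ₀·u₀), and there exists a Schwartz generalized eigenfunction u_g satisfying u_g'' + V·u_g + μ₀·u_g = u₀, then ⟨u₀, u₀⟩_PT = 0. -/

import Mathlib

open MeasureTheory Complex

/-- The PT-product `⟨f,g⟩_PT = ∫_ℝ conj(f(-x))·g(x) dx`. -/
noncomputable def PTprod (f g : ℝ → ℂ) : ℂ :=
  ∫ x : ℝ, (starRingEnd ℂ) (f (-x)) * g x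

lemma schwartz_bounded (f : SchwartzMap ℝ ℂ) : ∃ C : ℝ, ∀ x : ℝ, ‖f x‖ ≤ C := by
  obtain ⟨C, hCpos, hC⟩ := f.decay 0 0
  exact ⟨C, fun x => by simpa [norm_iteratedFDeriv_zero] using hC x⟩

/-- At a non-diagonal Jordan block (exceptional point): if `u₀` is an eigenfunction of
the PT-symmetric Schrödinger operator with real eigenvalue `μ₀` which possesses a
generalized eigenfunction `u_g`, then `⟨u₀,u₀⟩_PT = 0`. -/
theorem PT_selfproduct_exceptional_point (V : ℝ → ℂ) (hVcont : Continuous V)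
    (hVbdd : ∃ C : ℝ, ∀ x : ℝ, ‖V x‖ ≤ C)
    (hVPT : ∀ x : ℝ, (starRingEnd ℂ) (V (-x)) = V x)
    (μ₀ : ℝ) (u₀ : SchwartzMap ℝ ℂ)
    (hu₀ : ∀ x : ℝ, deriv (deriv u₀) x + V x * u₀ x = -(μ₀ : ℂ) * u₀ x)
    (hg : ∃ ug : SchwartzMap ℝ ℂ,
      ∀ x : ℝ, deriv (deriv ug) x + V x * ug x + (μ₀ : ℂ) * ug x = u₀ x) :
    PTprod (fun x => u₀ x) (fun x => u₀ x) = 0 := by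
  obtain ⟨ug, hug⟩ := hg
  -- first and second derivatives as Schwartz maps
  set d1 : SchwartzMap ℝ ℂ := SchwartzMap.derivCLM ℝ ℂ u₀ with hd1
  set d2 : SchwartzMap ℝ ℂ := SchwartzMap.derivCLM ℝ ℂ d1 with hd2
  set e1 : SchwartzMap ℝ ℂ := SchwartzMap.derivCLM ℝ ℂ ug with he1
  set e2 : SchwartzMap ℝ ℂ := SchwartzMap.derivCLM ℝ ℂ e1 with he2
  have hd1f : (d1 : ℝ → ℂ) = deriv u₀ := funext fun x => SchwartzMap.derivCLM_apply (𝕜 := ℝ) u₀ x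
  have hd2f : ∀ x, d2 x = deriv (deriv u₀) x := by
    intro x
    have : d2 x = deriv (d1 : ℝ → ℂ) x := SchwartzMap.derivCLM_apply (𝕜 := ℝ) d1 x
    rw [this, hd1f]
  have he1f : (e1 : ℝ → ℂ) = deriv ug := funext fun x => SchwartzMap.derivCLM_apply (𝕜 := ℝ) ug x
  have he2f : ∀ x, e2 x = deriv (deriv ug) x := by
    intro x
    have : e2 x = deriv (e1 : ℝ → ℂ) x := SchwartzMap.derivCLM_apply (𝕜 := ℝ) e1 x
    rw [this, he1f]
  -- the PT-conjugate functions
  set F : ℝ → ℂ := fun x => (starRingEnd ℂ) (u₀ (-x)) with hF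
  set F1 : ℝ → ℂ := fun x => -(starRingEnd ℂ) (d1 (-x)) with hF1
  set F2 : ℝ → ℂ := fun x => (starRingEnd ℂ) (d2 (-x)) with hF2
  -- derivatives of F
  have hderF : ∀ x : ℝ, HasDerivAt F (F1 x) x := by
    intro x
    have h1 : HasDerivAt (u₀ : ℝ → ℂ) (d1 (-x)) (-x) := by
      have := (u₀.differentiable.differentiableAt (x := -x)).hasDerivAt
      rwa [← SchwartzMap.derivCLM_apply (𝕜 := ℝ) u₀ (-x)] at this
    have h2 : HasDerivAt (fun y : ℝ => u₀ (-y)) ((-1 : ℝ) • d1 (-x)) x :=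
      h1.scomp x (hasDerivAt_neg x)
    have h3 := h2.star
    simp only [hF, hF1, starRingEnd_apply]
    convert h3 using 1
    · rfl
    simp [star_smul]
  have hderF1 : ∀ x : ℝ, HasDerivAt F1 (F2 x) x := by
    intro x
    have h1 : HasDerivAt (d1 : ℝ → ℂ) (d2 (-x)) (-x) := by
      have := (d1.differentiable.differentiableAt (x := -x)).hasDerivAt
      rwa [← SchwartzMap.derivCLM_apply (𝕜 := ℝ) d1 (-x)] at this
    have h2 : HasDerivAt (fun y : ℝ => d1 (-y)) ((-1 : ℝ) • d2 (-x)) x :=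
      h1.scomp x (hasDerivAt_neg x)
    have h3 := h2.star.neg
    simp only [hF1, hF2, starRingEnd_apply]
    convert h3 using 1
    · rfl
    · rfl
    simp [star_smul]
  -- boundedness and measurability of F, F1, F2
  have hFc : Continuous F := continuous_star.comp (u₀.continuous.comp continuous_neg)
  have hF1c : Continuous F1 := (continuous_star.comp (d1.continuous.comp continuous_neg)).neg
  have hF2c : Continuous F2 := continuous_star.comp (d2.continuous.comp continuous_neg)
  have hFb : ∃ C : ℝ, ∀ x, ‖F x‖ ≤ C := by
    obtain ⟨C, hC⟩ := schwartz_bounded u₀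
    exact ⟨C, fun x => by simpa [hF] using hC (-x)⟩
  have hF1b : ∃ C : ℝ, ∀ x, ‖F1 x‖ ≤ C := by
    obtain ⟨C, hC⟩ := schwartz_bounded d1
    exact ⟨C, fun x => by simpa [hF1] using hC (-x)⟩
  have hF2b : ∃ C : ℝ, ∀ x, ‖F2 x‖ ≤ C := by
    obtain ⟨C, hC⟩ := schwartz_bounded d2
    exact ⟨C, fun x => by simpa [hF2] using hC (-x)⟩
  -- integrability facts
  have bddmul : ∀ (h : ℝ → ℂ), Continuous h → (∃ C : ℝ, ∀ x, ‖h x‖ ≤ C) →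
      ∀ (g : SchwartzMap ℝ ℂ), Integrable (fun x => h x * g x) := by
    intro h hc hb g
    exact (g.integrable (μ := volume)).bdd_mul hc.aestronglyMeasurable (ae_of_all _ hb.choose_spec)
  have IW : Integrable (fun x => V x * ug x + (μ₀ : ℂ) * ug x) := by
    refine ((ug.integrable (μ := volume)).bdd_mul hVcont.aestronglyMeasurable (ae_of_all _ hVbdd.choose_spec)).add ?_
    exact (ug.integrable (μ := volume)).const_mul _
  have I1 : Integrable (fun x => F x * e2 x) := bddmul F hFc hFb e2
  have I2 : Integrable (fun x => F x * (V x * ug x + (μ₀ : ℂ) * ug x)) := by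
    obtain ⟨C, hC⟩ := hFb
    exact IW.bdd_mul hFc.aestronglyMeasurable (ae_of_all _ hC)
  have I3 : Integrable (fun x => F1 x * e1 x) := bddmul F1 hF1c hF1b e1
  have I4 : Integrable (fun x => F2 x * ug x) := bddmul F2 hF2c hF2b ug
  have I5 : Integrable (fun x => F x * e1 x) := bddmul F hFc hFb e1
  have I6 : Integrable (fun x => F1 x * ug x) := bddmul F1 hF1c hF1b ug
  -- integration by parts, twice
  have hve1 : ∀ x : ℝ, HasDerivAt (e1 : ℝ → ℂ) (e2 x) x := by
    intro x
    have := (e1.differentiable.differentiableAt (x := x)).hasDerivAt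
    rwa [← SchwartzMap.derivCLM_apply (𝕜 := ℝ) e1 x] at this
  have hvug : ∀ x : ℝ, HasDerivAt (ug : ℝ → ℂ) (e1 x) x := by
    intro x
    have := (ug.differentiable.differentiableAt (x := x)).hasDerivAt
    rwa [← SchwartzMap.derivCLM_apply (𝕜 := ℝ) ug x] at this
  have step1 : ∫ x : ℝ, F x * e2 x = -∫ x : ℝ, F1 x * e1 x :=
    integral_mul_deriv_eq_deriv_mul_of_integrable (fun x _ => hderF x) (fun x _ => hve1 x) I1 I3 I5
  have step2 : ∫ x : ℝ, F1 x * e1 x = -∫ x : ℝ, F2 x * ug x :=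
    integral_mul_deriv_eq_deriv_mul_of_integrable (fun x _ => hderF1 x) (fun x _ => hvug x) I3 I4 I6
  have parts : ∫ x : ℝ, F x * e2 x = ∫ x : ℝ, F2 x * ug x := by
    rw [step1, step2, neg_neg]
  -- the eigenvalue equation for F2
  have hF2eq : ∀ x : ℝ, F2 x = -(V x * F x + (μ₀ : ℂ) * F x) := by
    intro x
    have h := hu₀ (-x)
    have hd : deriv (deriv (u₀ : ℝ → ℂ)) (-x) = -(μ₀ : ℂ) * u₀ (-x) - V (-x) * u₀ (-x) := by
      linear_combination h
    have hthis : F2 x = (starRingEnd ℂ) (deriv (deriv (u₀ : ℝ → ℂ)) (-x)) := by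
      simp only [hF2]
      rw [hd2f]
    rw [hthis, hd]
    have hVx := hVPT x
    simp only [hF, map_sub, map_mul, map_neg, Complex.conj_ofReal, hVx]
    ring
  -- main computation
  have key : PTprod (fun x => u₀ x) (fun x => u₀ x)
      = ∫ x : ℝ, (F x * e2 x + F x * (V x * ug x + (μ₀ : ℂ) * ug x)) := by
    unfold PTprod
    congr 1
    funext x
    have h := hug x
    simp only [hF]
    rw [he2f, ← h]
    ring
  rw [key, integral_add I1 I2, parts]
  have : ∫ x : ℝ, F2 x * ug x = -∫ x : ℝ, F x * (V x * ug x + (μ₀ : ℂ) * ug x) := by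
    rw [← integral_neg]
    congr 1
    funext x
    rw [hF2eq x]
    ring
  rw [this]
  ring
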